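/- In the deepening construction, the limit profile σ (defined by σ(γ) := s_{|γ|+1}(γ)) satisfies: for every n, if a := d(p_{<n}) where p := p(σ), then g_a(p_{<n}, σ) = G_a(p_{<n}). That is, along the limit play, every node owner's guarantee is the best guarantee. -/

import Mathlib

variable {C A O : Type*}

/-- The prefix of length `n` of an infinite play. -/
def pref (p : ℕ → C) (n : ℕ) : List C := List.ofFn (fun i : Fin n => p (i : ℕ))

/-- Plays compatible with a partial strategy profile. -/
def Plays (s : List C → Option C) : Set (ℕ → C) :=
  {p | ∀ (n : ℕ) (c : C), s (pref p n) = some c → p n = c}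

/-- The history of length n induced by a total strategy profile. -/
def hist (t : List C → C) : ℕ → List C
  | 0 => []
  | n + 1 => hist t n ++ [t (hist t n)]

/-- The play induced by a total strategy profile: p(t)_n = t(p(t)_{<n}). -/
def play (t : List C → C) (n : ℕ) : C := t (hist t n)

open Classical in
/-- Restriction of a partial strategy profile to a set of histories. -/
noncomputable def restr (s : List C → Option C) (X : Set (List C)) (γ : List C) : Option C :=
  if γ ∈ X then s γ else none

/-- Restriction of a total strategy profile to a set of histories (as a partial one). -/
noncomputable def restrT (s : List C → C) (X : Set (List C)) : List C → Option C :=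
  restr (fun γ => some (s γ)) X

/-- γC^* : finite sequences extending γ. -/
def ext (γ : List C) : Set (List C) := {δ | γ <+: δ}

/-- γC^ω : infinite sequences extending γ. -/
def extω (γ : List C) : Set (ℕ → C) := {p | pref p γ.length = γ}


/-- A <ₐ-terminal interval. -/
def Terminal (lt : O → O → Prop) (I : Set O) : Prop := ∀ x y, lt x y → x ∈ I → y ∈ I

/-- The guarantee g_a(γ, s) of agent a at node γ under strategy profile s. -/
noncomputable def guar (d : List C → A) (v : (ℕ → C) → O) (lt : A → O → O → Prop)
    (a : A) (γ : List C) (s : List C → C) : Set O :=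
  {o | ∃ p ∈ Plays (restrT s {δ | δ ∈ ext γ ∧ d δ = a}) ∩ extω γ, lt a (v p) o ∨ v p = o}

/-- The best guarantee G_a(γ). -/
noncomputable def bestGuar (d : List C → A) (v : (ℕ → C) → O) (lt : A → O → O → Prop)
    (a : A) (γ : List C) : Set O :=
  ⋂ s : List C → C, guar d v lt a γ s

/-- Nash equilibrium of an infinite sequential game. -/
def NashEq (d : List C → A) (v : (ℕ → C) → O) (prec : A → O → O → Prop)
    (s : List C → C) : Prop :=
  ∀ (a : A) (s' : List C → C), (∀ γ, d γ ≠ a → s' γ = s γ) →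
    ¬ prec a (v (play s)) (v (play s'))

/-- Winning strategy for agent a (owning D) in ⟨C, D, W⟩. -/
def WinA (D : Set (List C)) (W : Set (ℕ → C)) (sa : List C → C) : Prop :=
  ∀ t : List C → C, (∀ γ ∈ D, t γ = sa γ) → play t ∈ W

/-- Winning strategy for agent b (owning C^* \ D) in ⟨C, D, W⟩. -/
def WinB (D : Set (List C)) (W : Set (ℕ → C)) (sb : List C → C) : Prop :=
  ∀ t : List C → C, (∀ γ ∉ D, t γ = sb γ) → play t ∉ W

/-- Determinacy of the two-agent win-lose game ⟨C, D, W⟩. -/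
def Determined (D : Set (List C)) (W : Set (ℕ → C)) : Prop :=
  (∃ sa, WinA D W sa) ∨ (∃ sb, WinB D W sb)

/-- The deepening construction: at step n, the owner a of the length-n node γ of the
current induced play refines his/her strategy inside the subtree rooted at γ to attain
the best guarantee there, unless the guarantee is already the best one. -/
def IsDeepening {C A O : Type*} (d : List C → A) (v : (ℕ → C) → O)
    (lt : A → O → O → Prop) (s : ℕ → List C → C) : Prop :=
  ∀ n : ℕ,
    (guar d v lt (d (pref (play (s n)) n)) (pref (play (s n)) n) (s n)
        = bestGuar d v lt (d (pref (play (s n)) n)) (pref (play (s n)) n) →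
      s (n + 1) = s n) ∧
    (guar d v lt (d (pref (play (s n)) n)) (pref (play (s n)) n) (s n)
        ≠ bestGuar d v lt (d (pref (play (s n)) n)) (pref (play (s n)) n) →
      ∃ μ : List C → C,
        guar d v lt (d (pref (play (s n)) n)) (pref (play (s n)) n) μ
          = bestGuar d v lt (d (pref (play (s n)) n)) (pref (play (s n)) n) ∧
        (∀ δ, δ ∈ ext (pref (play (s n)) n) ∧ d δ = d (pref (play (s n)) n) →
          s (n + 1) δ = μ δ) ∧
        (∀ δ, ¬ (δ ∈ ext (pref (play (s n)) n) ∧ d δ = d (pref (play (s n)) n)) →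
          s (n + 1) δ = s n δ))
section deepAux

variable {C A O : Type*}

lemma pref_length (p : ℕ → C) (n : ℕ) : (pref p n).length = n := List.length_ofFn

lemma pref_succ (p : ℕ → C) (n : ℕ) : pref p (n + 1) = pref p n ++ [p n] := by
  simp only [pref, List.ofFn_succ', List.concat_eq_append, Fin.coe_castSucc, Fin.val_last]

lemma pref_take (p : ℕ → C) {k n : ℕ} (h : k ≤ n) : (pref p n).take k = pref p k := by
  induction n with
  | zero =>
    have : k = 0 := by omega
    subst this; simp [pref]
  | succ n ih =>
    rcases Nat.lt_or_ge k (n + 1) with h' | h'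
    · rw [pref_succ, List.take_append_of_le_length (by rw [pref_length]; omega),
        ih (by omega)]
    · have hk : k = n + 1 := by omega
      subst hk
      exact List.take_of_length_le (le_of_eq (pref_length _ _))

lemma pref_prefix (p : ℕ → C) {k n : ℕ} (h : k ≤ n) : pref p k <+: pref p n := by
  rw [← pref_take p h]; exact List.take_prefix _ _

lemma hist_length (t : List C → C) (n : ℕ) : (hist t n).length = n := by
  induction n with
  | zero => rfl
  | succ n ih => simp [hist, ih]

lemma pref_play (t : List C → C) (n : ℕ) : pref (play t) n = hist t n := by
  induction n with
  | zero => rfl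
  | succ n ih => rw [pref_succ, ih]; rfl

lemma mem_plays_restrT {s : List C → C} {X : Set (List C)} {p : ℕ → C} :
    p ∈ Plays (restrT s X) ↔ ∀ n, pref p n ∈ X → p n = s (pref p n) := by
  constructor
  · intro h n hn
    exact h n _ (by simp [restrT, restr, hn])
  · intro h n c hc
    by_cases hn : pref p n ∈ X
    · rw [h n hn]
      simp [restrT, restr, hn] at hc
      exact hc
    · simp [restrT, restr, hn] at hc

lemma guar_congr {d : List C → A} {v : (ℕ → C) → O} {lt : A → O → O → Prop}
    {a : A} {γ : List C} {s s' : List C → C}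
    (h : ∀ δ, δ ∈ ext γ → d δ = a → s δ = s' δ) :
    guar d v lt a γ s = guar d v lt a γ s' := by
  have hres : restrT s {δ | δ ∈ ext γ ∧ d δ = a} = restrT s' {δ | δ ∈ ext γ ∧ d δ = a} := by
    funext δ
    by_cases hδ : δ ∈ ext γ ∧ d δ = a
    · simp only [restrT, restr, Set.mem_setOf_eq, hδ, if_true, h δ hδ.1 hδ.2]
    · simp only [restrT, restr, Set.mem_setOf_eq, hδ, if_false]
  unfold guar
  rw [hres]

lemma bestGuar_subset {d : List C → A} {v : (ℕ → C) → O} {lt : A → O → O → Prop}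
    {a : A} {γ : List C} (s : List C → C) :
    bestGuar d v lt a γ ⊆ guar d v lt a γ s := Set.iInter_subset _ s

lemma pref_eq_of_agree {t : List C → C} {q : ℕ → C} {m : ℕ} (hq : pref q m = hist t m)
    {j : ℕ} (h : j ≤ m) : pref q j = hist t j := by
  rw [← pref_take q h, hq, ← pref_play, pref_take _ h, pref_play]

lemma entry_eq_of_agree {t : List C → C} {q : ℕ → C} {m : ℕ} (hq : pref q m = hist t m)
    {j : ℕ} (h : j < m) : q j = t (hist t j) := by
  have h1 : pref q (j + 1) = hist t (j + 1) := pref_eq_of_agree hq h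
  have h2 : pref q j = hist t j := pref_eq_of_agree hq (le_of_lt h)
  rw [pref_succ, h2] at h1
  have h1' : hist t j ++ [q j] = hist t j ++ [t (hist t j)] := h1
  simpa using h1'

lemma ext_pref {p : ℕ → C} {γ : List C} {j : ℕ} (h : pref p j ∈ ext γ) :
    γ.length ≤ j ∧ pref p γ.length = γ := by
  have h' : γ <+: pref p j := h
  have hl : γ.length ≤ j := by
    have := h'.length_le
    rwa [pref_length] at this
  refine ⟨hl, ?_⟩
  have h2 := List.prefix_iff_eq_take.mp h'
  exact (h2.trans (pref_take p hl)).symm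

end deepAux
section deepMain

variable {C A O : Type*} (d : List C → A) (v : (ℕ → C) → O) (lt : A → O → O → Prop)
  (s : ℕ → List C → C) (σ : List C → C)

lemma step_main (hs : IsDeepening d v lt s) (m : ℕ) :
    guar d v lt (d (pref (play (s m)) m)) (pref (play (s m)) m) (s (m + 1))
      = bestGuar d v lt (d (pref (play (s m)) m)) (pref (play (s m)) m) ∧
    ∀ δ, ¬ (δ ∈ ext (pref (play (s m)) m) ∧ d δ = d (pref (play (s m)) m)) →
      s (m + 1) δ = s m δ := by
  obtain ⟨h1, h2⟩ := hs m
  by_cases h : guar d v lt (d (pref (play (s m)) m)) (pref (play (s m)) m) (s m)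
      = bestGuar d v lt (d (pref (play (s m)) m)) (pref (play (s m)) m)
  · rw [h1 h]; exact ⟨h, fun δ _ => rfl⟩
  · obtain ⟨μ, hμ1, hμ2, hμ3⟩ := h2 h
    refine ⟨?_, hμ3⟩
    rw [← hμ1]
    exact guar_congr fun δ hd1 hd2 => hμ2 δ ⟨hd1, hd2⟩

lemma s_stable (hs : IsDeepening d v lt s) (δ : List C) :
    ∀ m, δ.length < m → s m δ = s (δ.length + 1) δ := by
  have : ∀ m, δ.length + 1 ≤ m → s m δ = s (δ.length + 1) δ := by
    intro m hm
    induction m, hm using Nat.le_induction with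
    | base => rfl
    | succ i hi ih =>
      rw [← ih]
      apply (step_main d v lt s hs i).2
      rintro ⟨hmem, -⟩
      have := hmem.length_le
      rw [pref_length] at this
      omega
  intro m hm
  exact this m (by omega)

lemma hist_sigma (hs : IsDeepening d v lt s) (hσ : ∀ γ : List C, σ γ = s (γ.length + 1) γ) :
    ∀ {n m : ℕ}, n ≤ m → hist σ n = hist (s m) n := by
  intro n
  induction n with
  | zero => intro m _; rfl
  | succ n ih =>
    intro m h
    have h' : n ≤ m := by omega
    show hist σ n ++ [σ (hist σ n)] = hist (s m) n ++ [s m (hist (s m) n)]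
    have e1 : σ (hist σ n) = s (n + 1) (hist σ n) := by rw [hσ, hist_length]
    have e2 : s m (hist σ n) = s (n + 1) (hist σ n) := by
      have := s_stable d v lt s hs (hist σ n) m (by rw [hist_length]; omega)
      rwa [hist_length] at this
    rw [← ih h', e1, e2]

lemma gamma_eq (hs : IsDeepening d v lt s) (hσ : ∀ γ : List C, σ γ = s (γ.length + 1) γ)
    (m : ℕ) : pref (play (s m)) m = hist σ m := by
  rw [pref_play]
  exact (hist_sigma d v lt s σ hs hσ le_rfl).symm

lemma hist_prefix (t : List C → C) {k n : ℕ} (h : k ≤ n) : hist t k <+: hist t n := by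
  rw [← pref_play, ← pref_play]
  exact pref_prefix _ h

/-- Transfer of a guarantee witness from a deeper node on the σ-play to a shallower one. -/
lemma guar_seg (hs : IsDeepening d v lt s) (hσ : ∀ γ : List C, σ γ = s (γ.length + 1) γ)
    {a : A} {n m : ℕ} (hnm : n ≤ m) :
    guar d v lt a (hist σ m) (s m) ⊆ guar d v lt a (hist σ n) (s m) := by
  rintro o ⟨q, ⟨hq1, hq2⟩, hqo⟩
  rw [mem_plays_restrT] at hq1
  have hq2' : pref q m = hist σ m := by
    have h := hq2
    simp only [extω, Set.mem_setOf_eq, hist_length] at h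
    exact h
  refine ⟨q, ⟨mem_plays_restrT.mpr ?_, ?_⟩, hqo⟩
  · rintro j ⟨hj1, hj2⟩
    rcases Nat.lt_or_ge j m with hjm | hjm
    · have hpre : pref q j = hist σ j := pref_eq_of_agree hq2' hjm.le
      have hqj : q j = σ (hist σ j) := entry_eq_of_agree hq2' hjm
      rw [hpre, hqj, hσ, hist_length]
      have := s_stable d v lt s hs (hist σ j) m (by rw [hist_length]; omega)
      rw [hist_length] at this
      exact this.symm
    · refine hq1 j ⟨?_, hj2⟩
      show hist σ m <+: pref q j
      rw [← hq2']
      exact pref_prefix q hjm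
  · show pref q (hist σ n).length = hist σ n
    rw [hist_length]
    exact pref_eq_of_agree hq2' hnm

end deepMain
section deepL

variable {C A O : Type*} (d : List C → A) (v : (ℕ → C) → O) (lt : A → O → O → Prop)
  (s : ℕ → List C → C) (σ : List C → C)

/-- The finite induction: from stage n+1 on, the guarantee of the owner of the
length-n node of the σ-play, at that node, is the best guarantee. -/
lemma lemL (hs : IsDeepening d v lt s) (hσ : ∀ γ : List C, σ γ = s (γ.length + 1) γ)
    (n : ℕ) : ∀ m, n + 1 ≤ m →
      guar d v lt (d (hist σ n)) (hist σ n) (s m)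
        = bestGuar d v lt (d (hist σ n)) (hist σ n) := by
  intro m hm
  induction m, hm using Nat.le_induction with
  | base =>
    have h := (step_main d v lt s hs n).1
    rwa [gamma_eq d v lt s σ hs hσ] at h
  | succ m hm IH =>
    have hnm : n < m := by omega
    apply Set.Subset.antisymm _ (bestGuar_subset _)
    intro o ho
    obtain ⟨p, ⟨hp1, hp2⟩, hpo⟩ := ho
    rw [mem_plays_restrT] at hp1
    have hΓ := gamma_eq d v lt s σ hs hσ m
    have hstep := step_main d v lt s hs m
    rw [hΓ] at hstep
    obtain ⟨hstep1, hstep2⟩ := hstep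
    by_cases hcase : d (hist σ m) = d (hist σ n) ∧ pref p m = hist σ m
    · -- the witness play goes through the node of stage m, owned by the same agent
      obtain ⟨hba, hpm⟩ := hcase
      rw [hba] at hstep1
      have hguarm : o ∈ guar d v lt (d (hist σ n)) (hist σ m) (s (m + 1)) := by
        refine ⟨p, ⟨mem_plays_restrT.mpr ?_, ?_⟩, hpo⟩
        · rintro j ⟨hj1, hj2⟩
          exact hp1 j ⟨(hist_prefix σ hnm.le).trans hj1, hj2⟩
        · show pref p (hist σ m).length = hist σ m
          rw [hist_length]; exact hpm
      rw [hstep1] at hguarm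
      have hguarm' : o ∈ guar d v lt (d (hist σ n)) (hist σ m) (s m) :=
        bestGuar_subset _ hguarm
      rw [← IH]
      exact guar_seg d v lt s σ hs hσ hnm.le hguarm'
    · -- otherwise the witness play is already compatible with s m
      rw [← IH]
      refine ⟨p, ⟨mem_plays_restrT.mpr ?_, hp2⟩, hpo⟩
      rintro j ⟨hj1, hj2⟩
      rw [hp1 j ⟨hj1, hj2⟩]
      apply hstep2
      rintro ⟨he1, he2⟩
      obtain ⟨hlen, htake⟩ := ext_pref he1
      rw [hist_length] at htake
      exact hcase ⟨he2 ▸ hj2, htake⟩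

end deepL
section deepWF

variable {C A O : Type*} (d : List C → A) (v : (ℕ → C) → O) (lt : A → O → O → Prop)
  (s : ℕ → List C → C) (σ : List C → C)

lemma guar_up {a : A} (ht : ∀ x y z : O, lt a x y → lt a y z → lt a x z)
    {γ : List C} {t : List C → C} {o o' : O}
    (h : o ∈ guar d v lt a γ t) (hlt : lt a o o') : o' ∈ guar d v lt a γ t := by
  obtain ⟨p, hp, hpo⟩ := h
  refine ⟨p, hp, Or.inl ?_⟩
  rcases hpo with h1 | h1
  · exact ht _ _ _ h1 hlt
  · rw [h1]; exact hlt

lemma bestGuar_up {a : A} (ht : ∀ x y z : O, lt a x y → lt a y z → lt a x z)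
    {γ : List C} {o o' : O}
    (h : o ∈ bestGuar d v lt a γ) (hlt : lt a o o') : o' ∈ bestGuar d v lt a γ := by
  rw [bestGuar, Set.mem_iInter] at h ⊢
  exact fun t => guar_up d v lt ht (h t) hlt

/-- Only finitely many stages are "bad" (strict improvement needed) for a given agent. -/
lemma no_bad_tail (hwo : ∀ a, IsWellOrder O (fun x y => lt a y x))
    (hs : IsDeepening d v lt s) (hσ : ∀ γ : List C, σ γ = s (γ.length + 1) γ) (a : A) :
    ∃ M, ∀ m, M ≤ m →
      ¬ (d (hist σ m) = a ∧
        guar d v lt a (hist σ m) (s m) ≠ bestGuar d v lt a (hist σ m)) := by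
  by_contra hcon
  push_neg at hcon
  -- extract an increasing sequence of bad stages
  choose f hf1 hf2 using hcon
  set g : ℕ → ℕ := fun k => Nat.rec (f 0) (fun _ gk => f (gk + 1)) k with hg
  have hgsucc : ∀ k, g (k + 1) = f (g k + 1) := fun k => rfl
  have hg1 : ∀ k, d (hist σ (g k)) = a ∧
      guar d v lt a (hist σ (g k)) (s (g k)) ≠ bestGuar d v lt a (hist σ (g k)) := by
    intro k
    cases k with
    | zero => exact hf2 0
    | succ k => rw [hgsucc]; exact hf2 _
  have hg2 : ∀ k, g k < g (k + 1) := by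
    intro k
    rw [hgsucc]
    exact lt_of_lt_of_le (Nat.lt_succ_self _) (hf1 (g k + 1))
  -- pick a witness outside the best guarantee at each bad stage
  have hx : ∀ k, ∃ x, x ∈ guar d v lt a (hist σ (g k)) (s (g k)) ∧
      x ∉ bestGuar d v lt a (hist σ (g k)) := by
    intro k
    by_contra hc
    push_neg at hc
    exact (hg1 k).2 (Set.Subset.antisymm (fun x hxg => hc x hxg) (bestGuar_subset _))
  choose x hx1 hx2 using hx
  -- each next witness lands in the previous best guarantee
  have hkey : ∀ k, x (k + 1) ∈ bestGuar d v lt a (hist σ (g k)) := by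
    intro k
    have hL := lemL d v lt s σ hs hσ (g k) (g (k + 1)) (hg2 k)
    rw [(hg1 k).1] at hL
    rw [← hL]
    exact guar_seg d v lt s σ hs hσ (hg2 k).le (hx1 (k + 1))
  -- hence an infinite strictly increasing chain of outcomes: contradiction
  haveI := hwo a
  have ht : ∀ u y z : O, lt a u y → lt a y z → lt a u z := by
    intro u y z h1 h2
    exact IsTrans.trans (r := fun x y : O => lt a y x) z y u h2 h1
  have hchain : ∀ k, lt a (x k) (x (k + 1)) := by
    intro k
    rcases (trichotomous_of (fun x y : O => lt a y x) (x k) (x (k + 1)))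
      with h | h | h
    · -- lt a (x (k+1)) (x k)
      exact absurd (bestGuar_up d v lt ht (hkey k) h) (hx2 k)
    · exact absurd (h ▸ hkey k) (hx2 k)
    · exact h
  have hacc : ∀ z : O, Acc (fun x y : O => lt a y x) z → ∀ k, x k ≠ z := by
    intro z hz
    induction hz with
    | intro w _ ih =>
      intro k hk
      exact ih (x (k + 1)) (hk ▸ hchain k) (k + 1) rfl
  exact hacc (x 0) ((IsWellFounded.wf (r := fun x y : O => lt a y x)).apply (x 0)) 0 rfl

end deepWF

/-- Along the play p of the limit profile σ of the deepening
construction, every node owner's guarantee is the best guarantee. -/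
theorem deepening_limit_best {C A O : Type*} [Nonempty C] [Nonempty A] [Nonempty O]
    (d : List C → A) (v : (ℕ → C) → O) (lt : A → O → O → Prop)
    (hwo : ∀ a, IsWellOrder O (fun x y => lt a y x))
    (s : ℕ → List C → C) (hs : IsDeepening d v lt s)
    (σ : List C → C) (hσ : ∀ γ : List C, σ γ = s (γ.length + 1) γ) :
    ∀ n : ℕ,
      guar d v lt (d (pref (play σ) n)) (pref (play σ) n) σ
        = bestGuar d v lt (d (pref (play σ) n)) (pref (play σ) n) := by
  intro n
  classical
  rw [pref_play σ n]
  apply Set.Subset.antisymm _ (bestGuar_subset _)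
  intro o ho
  obtain ⟨p, ⟨hp1, hp2⟩, hpo⟩ := ho
  rw [mem_plays_restrT] at hp1
  have hp2' : pref p n = hist σ n := by
    have h := hp2
    simp only [extω, Set.mem_setOf_eq, hist_length] at h
    exact h
  by_cases hdev : ∃ k, pref p (k + 1) ≠ hist σ (k + 1)
  · -- the witness play deviates from the σ-play at some point
    have hk := Nat.find_spec hdev
    set k := Nat.find hdev with hkdef
    have hkn : n ≤ k := by
      by_contra hcon
      push_neg at hcon
      exact hk (pref_eq_of_agree hp2' (by omega))
    rw [← lemL d v lt s σ hs hσ n (k + 1) (by omega)]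
    refine ⟨p, ⟨mem_plays_restrT.mpr ?_, hp2⟩, hpo⟩
    rintro j ⟨hj1, hj2⟩
    rw [hp1 j ⟨hj1, hj2⟩, hσ, pref_length]
    rcases Nat.lt_or_ge j (k + 1) with hjk | hjk
    · have := s_stable d v lt s hs (pref p j) (k + 1) (by rw [pref_length]; omega)
      rw [pref_length] at this
      exact this.symm
    · have havoid : ∀ m', k + 1 ≤ m' → pref p j ∉ ext (hist σ m') := by
        intro m' hm' hmem
        obtain ⟨-, htake⟩ := ext_pref hmem
        rw [hist_length] at htake
        exact hk (pref_eq_of_agree htake hm')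
      have hconst : ∀ i, k + 1 ≤ i → s i (pref p j) = s (k + 1) (pref p j) := by
        intro i hi
        induction i, hi using Nat.le_induction with
        | base => rfl
        | succ i hi ih =>
          have hstep2 := (step_main d v lt s hs i).2
          rw [gamma_eq d v lt s σ hs hσ i] at hstep2
          rw [hstep2 (pref p j) (fun hh => havoid i hi hh.1), ih]
      exact hconst (j + 1) (by omega)
  · -- the witness play is the σ-play itself
    push_neg at hdev
    have hall : ∀ j, pref p j = hist σ j := by
      intro j
      cases j with
      | zero => rfl
      | succ j => exact hdev j
    obtain ⟨M0, hM⟩ := no_bad_tail d v lt s σ hwo hs hσ (d (hist σ n))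
    rw [← lemL d v lt s σ hs hσ n (max M0 (n + 1)) (le_max_right _ _)]
    refine ⟨p, ⟨mem_plays_restrT.mpr ?_, hp2⟩, hpo⟩
    rintro j ⟨hj1, hj2⟩
    have hj2' : d (hist σ j) = d (hist σ n) := by rw [← hall j]; exact hj2
    rw [hp1 j ⟨hj1, hj2⟩, hσ, pref_length, hall j]
    rcases Nat.lt_or_ge j (max M0 (n + 1)) with hjM | hjM
    · have := s_stable d v lt s hs (hist σ j) (max M0 (n + 1)) (by rw [hist_length]; omega)
      rw [hist_length] at this
      exact this.symm
    · have hstepc : ∀ i, max M0 (n + 1) ≤ i → s (i + 1) (hist σ j) = s i (hist σ j) := by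
        intro i hi
        by_cases hdi : d (hist σ i) = d (hist σ n)
        · have hnb := hM i (le_trans (le_max_left _ _) hi)
          push_neg at hnb
          have h1 := (hs i).1
          rw [gamma_eq d v lt s σ hs hσ i, hdi] at h1
          rw [h1 (hnb hdi)]
        · have hstep2 := (step_main d v lt s hs i).2
          rw [gamma_eq d v lt s σ hs hσ i] at hstep2
          apply hstep2
          rintro ⟨-, he2⟩
          exact hdi (he2 ▸ hj2')
      have hconst : ∀ i, max M0 (n + 1) ≤ i →
          s i (hist σ j) = s (max M0 (n + 1)) (hist σ j) := by
        intro i hi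
        induction i, hi using Nat.le_induction with
        | base => rfl
        | succ i hi ih => rw [hstepc i hi, ih]
      exact hconst (j + 1) (by omega)
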